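/- For 0 ≤ x < a, W(x) = (1-c₁)e^{-(ρ₁⁻+ρ₂⁻)a}(e^{ρ₂⁻x} - e^{ρ₁⁻x}), and this equals ((ρ₂⁻ - ρ₁⁺)e^{2μ₋a}/(ρ₂⁻ - ρ₁⁻))(e^{ρ₂⁻x} - e^{ρ₁⁻x}) when β = 0. -/

import Mathlib

theorem W_formula_below_a (q a μp μm β : ℝ) (hq : 0 < q) (ha : 0 < a)
    (hβ : β ∈ Set.Ioo (-1 : ℝ) 1)
    (ρ1m ρ2m ρ1p ρ2p c₁ c₂ : ℝ)
    (hρ1m : ρ1m = -(μm + Real.sqrt (μm^2 + 2*q)))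
    (hρ2m : ρ2m = -μm + Real.sqrt (μm^2 + 2*q))
    (hρ1p : ρ1p = -(μp + Real.sqrt (μp^2 + 2*q)))
    (hρ2p : ρ2p = -μp + Real.sqrt (μp^2 + 2*q))
    (hc₁ : c₁ = ((1+β)*ρ1p - (1-β)*ρ1m) / ((1-β)*(ρ2m - ρ1m)))
    (hc₂ : c₂ = ((1+β)*ρ2p - (1-β)*ρ2m) / ((1+β)*(ρ2p - ρ1p)))
    (g₁ g₂ W : ℝ → ℝ)
    (hg₁ : ∀ x, g₁ x = if a < x then Real.exp (ρ1p*(x-a))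
      else c₁ * Real.exp (ρ2m*(x-a)) + (1-c₁) * Real.exp (ρ1m*(x-a)))
    (hg₂ : ∀ x, g₂ x = if a < x then (1-c₂) * Real.exp (ρ2p*(x-a)) + c₂ * Real.exp (ρ1p*(x-a))
      else Real.exp (ρ2m*(x-a)))
    (hW : ∀ x, W x = g₂ x * g₁ 0 - g₁ x * g₂ 0) :
    ∀ x, 0 ≤ x → x < a →
      W x = (1-c₁) * Real.exp (-(ρ1m+ρ2m)*a) * (Real.exp (ρ2m*x) - Real.exp (ρ1m*x)) ∧
      (β = 0 →
        W x = (ρ2m - ρ1p) * Real.exp (2*μm*a) / (ρ2m - ρ1m) *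
          (Real.exp (ρ2m*x) - Real.exp (ρ1m*x))) := by

  intro x hx hxa
  have hax : ¬ a < x := not_lt.mpr hxa.le
  have ha0 : ¬ a < (0:ℝ) := not_lt.mpr ha.le
  have hs : 0 < Real.sqrt (μm^2 + 2*q) := Real.sqrt_pos.mpr (by nlinarith [sq_nonneg μm])
  have hd : ρ2m - ρ1m ≠ 0 := by rw [hρ1m, hρ2m]; nlinarith
  have e : ∀ r y : ℝ, Real.exp (r*(y-a)) = Real.exp (r*y) / Real.exp (r*a) := by
    intro r y; rw [← Real.exp_sub]; ring_nf
  have key : W x = (1-c₁) * Real.exp (-(ρ1m+ρ2m)*a) *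
      (Real.exp (ρ2m*x) - Real.exp (ρ1m*x)) := by
    rw [hW, hg₁, hg₂, hg₁, hg₂]
    simp only [if_neg hax, if_neg ha0]
    rw [e, e, e, e, show -(ρ1m+ρ2m)*a = -(ρ1m*a + ρ2m*a) by ring,
      Real.exp_neg, Real.exp_add]
    field_simp
    simp only [mul_zero, zero_mul, Real.exp_zero]
    ring
  refine ⟨key, fun hb => ?_⟩
  subst hb
  rw [key]
  have h1 : (1:ℝ) - c₁ = (ρ2m - ρ1p)/(ρ2m - ρ1m) := by
    rw [hc₁]; field_simp; ring
  have h2 : -(ρ1m+ρ2m)*a = 2*μm*a := by rw [hρ1m, hρ2m]; ring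
  rw [h1, h2]
  ring
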